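/- Let {D_k} be a sequence of open discs in ℂ with radii r_k and let s_k denote the distance from D_k to the point 1. Suppose Σ_k r_k · exp(2ρ₂/s_k) < ∞ for a fixed ρ₂ > 0. Then for each n, the total variation of the complex measure μ_n defined on the boundary of K_n = D̄(0, 1+1/n) \ ∪_{k≤n} D_k by dμ_n = exp(−ρ₂(z+1)/(z−1)) dz satisfies ‖μ_n‖ ≤ 2π(M + 2), where M = Σ_k r_k · exp(2ρ₂/s_k). -/

import Mathlib

open Metric


lemma re_eq (ρ₂ : ℝ) (z : ℂ) :
    (-(ρ₂:ℂ) * (z+1) / (z-1)).re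
      = -ρ₂ * ((Complex.normSq z - 1) / Complex.normSq (z-1)) := by
  rcases eq_or_ne z 1 with rfl | h
  · simp
  have hN : Complex.normSq (z - 1) ≠ 0 := by
    simpa [sub_eq_zero] using h
  rw [Complex.div_re]
  simp only [Complex.normSq_apply, Complex.sub_re, Complex.sub_im, Complex.mul_re, Complex.mul_im,
    Complex.add_re, Complex.add_im, Complex.neg_re, Complex.neg_im, Complex.one_re,
    Complex.one_im, Complex.ofReal_re, Complex.ofReal_im] at *
  field_simp
  ring

lemma norm_exp_le_one (ρ₂ : ℝ) (hρ : 0 ≤ ρ₂) (z : ℂ) (hz : 1 ≤ ‖z‖) :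
    ‖Complex.exp (-(ρ₂:ℂ) * (z+1) / (z-1))‖ ≤ 1 := by
  rw [Complex.norm_exp]
  have h1 : 1 ≤ Complex.normSq z := by
    rw [← Complex.sq_norm]
    nlinarith [hz, hz]
  have h2 : (0:ℝ) ≤ Complex.normSq (z-1) := Complex.normSq_nonneg _
  calc Real.exp ((-(ρ₂:ℂ) * (z+1) / (z-1)).re) ≤ Real.exp 0 := by
        rw [re_eq]
        apply Real.exp_le_exp.2
        have : 0 ≤ (Complex.normSq z - 1) / Complex.normSq (z-1) :=
          div_nonneg (by linarith) h2
        nlinarith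
    _ = 1 := Real.exp_zero

lemma norm_exp_le (ρ₂ s : ℝ) (hρ : 0 ≤ ρ₂) (hs : 0 < s) (z : ℂ) (hz : s ≤ ‖z - 1‖) :
    ‖Complex.exp (-(ρ₂:ℂ) * (z+1) / (z-1))‖ ≤ Real.exp (2 * ρ₂ / s) := by
  rw [Complex.norm_exp, re_eq]
  apply Real.exp_le_exp.2
  set d : ℝ := ‖z - 1‖ with hd
  have hd0 : 0 < d := lt_of_lt_of_le hs hz
  have hN : Complex.normSq (z - 1) = d ^ 2 := by
    rw [← Complex.sq_norm]
  have hre : -d ≤ (z - 1).re := by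
    have := Complex.abs_re_le_norm (z - 1)
    rw [← hd] at this
    rcases abs_le.mp this with ⟨h, _⟩; linarith
  have hexp : Complex.normSq z - 1 = d ^ 2 + 2 * (z - 1).re := by
    have : Complex.normSq (z - 1) = Complex.normSq z - 2 * z.re + 1 := by
      simp [Complex.normSq_apply, Complex.sub_re, Complex.sub_im]; ring
    have hzre : (z - 1).re = z.re - 1 := by simp
    rw [hzre]; linarith [hN ▸ this]
  rw [hN, hexp]
  have key : 1 - 2 / d ≤ (d ^ 2 + 2 * (z - 1).re) / d ^ 2 := by
    rw [le_div_iff₀ (by positivity : (0:ℝ) < d ^ 2)]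
    have hdd : 2 / d * d = 2 := div_mul_cancel₀ _ (ne_of_gt hd0)
    nlinarith [hdd, hre, hd0]
  have h1 : -ρ₂ * ((d ^ 2 + 2 * (z - 1).re) / d ^ 2) ≤ -ρ₂ * (1 - 2 / d) := by
    apply mul_le_mul_of_nonpos_left key (by linarith)
  have h2 : -ρ₂ * (1 - 2 / d) ≤ 2 * ρ₂ / d := by
    have : 0 ≤ ρ₂ / d := by positivity
    field_simp
    nlinarith
  have h3 : 2 * ρ₂ / d ≤ 2 * ρ₂ / s := by
    apply div_le_div_of_nonneg_left (by linarith) hs hz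
  linarith


/-- Let `{D_k}` be open discs (centers `c k`, radii `r k`) with
`s k ≤ |z − 1|` for `z` in the closed disc `D̄(c k, r k)`, and suppose
`M = Σ_k r_k exp(2ρ₂/s_k) < ∞`.  Then the total variation of the measure
`dμ_n = exp(−ρ₂(z+1)/(z−1)) dz` on `∂K_n`, where
`K_n = D̄(0, 1+1/n) \ ∪_{k<n} D_k`, is at most `2π(M + 2)`; the total variation is bounded
by the sum of the integrals of the modulus of the density over the circles making up the
boundary, parametrized by `circleMap`. -/
theorem stmt9 (ρ₂ : ℝ) (hρ : 0 < ρ₂) (c : ℕ → ℂ) (r s : ℕ → ℝ)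
    (hr : ∀ k, 0 < r k) (hs : ∀ k, 0 < s k)
    (hsk : ∀ k, ∀ z ∈ Metric.closedBall (c k) (r k), s k ≤ ‖z - 1‖)
    (hsum : Summable (fun k => r k * Real.exp (2 * ρ₂ / s k)))
    (n : ℕ) (hn : 1 ≤ n) :
    (∫ θ in (0 : ℝ)..(2 * Real.pi),
        ‖Complex.exp (-(ρ₂ : ℂ) * (circleMap 0 (1 + 1 / n) θ + 1) /
            (circleMap 0 (1 + 1 / n) θ - 1))‖ * (1 + 1 / n))
      + ∑ k ∈ Finset.range n, ∫ θ in (0 : ℝ)..(2 * Real.pi),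
          ‖Complex.exp (-(ρ₂ : ℂ) * (circleMap (c k) (r k) θ + 1) /
              (circleMap (c k) (r k) θ - 1))‖ * r k
      ≤ 2 * Real.pi * ((∑' k, r k * Real.exp (2 * ρ₂ / s k)) + 2) := by
  have hπ : 0 < Real.pi := Real.pi_pos
  have h2π : (0:ℝ) ≤ 2 * Real.pi := by linarith
  have hn0 : (0:ℝ) < 1 / n := by
    have : (0:ℝ) < (n:ℝ) := by exact_mod_cast hn
    positivity
  set R : ℝ := 1 + 1 / n with hR
  have hR1 : 1 < R := by rw [hR]; linarith
  -- generic continuity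
  have cont : ∀ (a : ℂ) (ρ : ℝ), (∀ θ : ℝ, circleMap a ρ θ ≠ 1) →
      Continuous (fun θ : ℝ => ‖Complex.exp (-(ρ₂:ℂ) * (circleMap a ρ θ + 1) /
        (circleMap a ρ θ - 1))‖ * ρ) := by
    intro a ρ h
    apply Continuous.mul _ continuous_const
    apply Continuous.norm
    apply Continuous.cexp
    exact Continuous.div (by continuity) (by continuity) (fun θ => sub_ne_zero.mpr (h θ))
  -- outer circle
  have houter_ne : ∀ θ : ℝ, circleMap 0 R θ ≠ 1 := by
    intro θ hθ
    have := norm_circleMap_zero R θ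
    rw [hθ] at this
    simp at this
    rw [abs_of_pos (by linarith)] at this
    linarith
  have houter : (∫ θ in (0 : ℝ)..(2 * Real.pi),
      ‖Complex.exp (-(ρ₂ : ℂ) * (circleMap 0 R θ + 1) /
          (circleMap 0 R θ - 1))‖ * R) ≤ 2 * Real.pi * 2 := by
    have hb : ∀ θ ∈ Set.Icc (0:ℝ) (2 * Real.pi),
        ‖Complex.exp (-(ρ₂ : ℂ) * (circleMap 0 R θ + 1) /
          (circleMap 0 R θ - 1))‖ * R ≤ R := by
      intro θ _
      have h1 : 1 ≤ ‖circleMap 0 R θ‖ := by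
        rw [norm_circleMap_zero, abs_of_pos (by linarith)]
        linarith
      nlinarith [norm_exp_le_one ρ₂ (le_of_lt hρ) (circleMap 0 R θ) h1,
        norm_nonneg (Complex.exp (-(ρ₂ : ℂ) * (circleMap 0 R θ + 1) /
          (circleMap 0 R θ - 1)))]
    calc (∫ θ in (0 : ℝ)..(2 * Real.pi),
        ‖Complex.exp (-(ρ₂ : ℂ) * (circleMap 0 R θ + 1) /
          (circleMap 0 R θ - 1))‖ * R)
        ≤ ∫ _ in (0 : ℝ)..(2 * Real.pi), R := by
          apply intervalIntegral.integral_mono_on (by linarith)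
            ((cont 0 R houter_ne).intervalIntegrable _ _) intervalIntegrable_const hb
      _ = 2 * Real.pi * R := by simp [intervalIntegral.integral_const]
      _ ≤ 2 * Real.pi * 2 := by
          apply mul_le_mul_of_nonneg_left _ h2π
          have : 1 / (n:ℝ) ≤ 1 := by
            rw [div_le_one (by exact_mod_cast hn)]
            exact_mod_cast hn
          rw [hR]; linarith
  -- discs
  have hdisc : ∀ k, (∫ θ in (0 : ℝ)..(2 * Real.pi),
      ‖Complex.exp (-(ρ₂ : ℂ) * (circleMap (c k) (r k) θ + 1) /
          (circleMap (c k) (r k) θ - 1))‖ * r k)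
      ≤ 2 * Real.pi * (r k * Real.exp (2 * ρ₂ / s k)) := by
    intro k
    have hmem : ∀ θ : ℝ, circleMap (c k) (r k) θ ∈ closedBall (c k) (r k) :=
      fun θ => circleMap_mem_closedBall _ (le_of_lt (hr k)) θ
    have hne : ∀ θ : ℝ, circleMap (c k) (r k) θ ≠ 1 := by
      intro θ hθ
      have := hsk k _ (hmem θ)
      rw [hθ] at this
      simp at this
      linarith [hs k]
    have hb : ∀ θ ∈ Set.Icc (0:ℝ) (2 * Real.pi),
        ‖Complex.exp (-(ρ₂ : ℂ) * (circleMap (c k) (r k) θ + 1) /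
          (circleMap (c k) (r k) θ - 1))‖ * r k ≤ Real.exp (2 * ρ₂ / s k) * r k := by
      intro θ _
      have := norm_exp_le ρ₂ (s k) (le_of_lt hρ) (hs k) _ (hsk k _ (hmem θ))
      nlinarith [hr k]
    calc (∫ θ in (0 : ℝ)..(2 * Real.pi),
        ‖Complex.exp (-(ρ₂ : ℂ) * (circleMap (c k) (r k) θ + 1) /
          (circleMap (c k) (r k) θ - 1))‖ * r k)
        ≤ ∫ _ in (0 : ℝ)..(2 * Real.pi), Real.exp (2 * ρ₂ / s k) * r k := by
          apply intervalIntegral.integral_mono_on (by linarith)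
            ((cont (c k) (r k) hne).intervalIntegrable _ _) intervalIntegrable_const hb
      _ = 2 * Real.pi * (r k * Real.exp (2 * ρ₂ / s k)) := by
          simp [intervalIntegral.integral_const]; ring
  have hsumle : ∑ k ∈ Finset.range n, (∫ θ in (0 : ℝ)..(2 * Real.pi),
      ‖Complex.exp (-(ρ₂ : ℂ) * (circleMap (c k) (r k) θ + 1) /
          (circleMap (c k) (r k) θ - 1))‖ * r k)
      ≤ 2 * Real.pi * ∑' k, r k * Real.exp (2 * ρ₂ / s k) := by
    calc _ ≤ ∑ k ∈ Finset.range n, 2 * Real.pi * (r k * Real.exp (2 * ρ₂ / s k)) :=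
          Finset.sum_le_sum (fun k _ => hdisc k)
      _ = 2 * Real.pi * ∑ k ∈ Finset.range n, r k * Real.exp (2 * ρ₂ / s k) := by
          rw [Finset.mul_sum]
      _ ≤ 2 * Real.pi * ∑' k, r k * Real.exp (2 * ρ₂ / s k) := by
          apply mul_le_mul_of_nonneg_left _ h2π
          exact Summable.sum_le_tsum (Finset.range n)
            (fun k _ => mul_nonneg (hr k).le (Real.exp_nonneg _)) hsum
  linarith
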